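/- Let M be an m×n complex matrix of rank ρ with compact SVD M = UΣV^*, where U is m×ρ and V is n×ρ, each with orthonormal columns, and Σ is the ρ×ρ diagonal matrix of the (positive) singular values of M. Let I be a set of k ≥ ρ row indices and J a set of l ≥ ρ column indices such that U_{I,:} has rank ρ and (V^*)_{:,J} has rank ρ, and set G = U_{I,:}Σ(V^*)_{:,J} and N = G⁺. Then ‖N‖₂ ≤ ‖((V^*)_{:,J})⁺‖₂ · ‖(U_{I,:})⁺‖₂ / σ_ρ(M), where σ_ρ(M) is the smallest positive singular value of M. -/
import Mathlib


open Matrix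

/-- Spectral norm of a complex matrix. -/
noncomputable def spec {m n : ℕ} (A : Matrix (Fin m) (Fin n) ℂ) : ℝ :=
  ‖LinearMap.toContinuousLinearMap (Matrix.toEuclideanLin A)‖

/-- `X` is the Moore–Penrose pseudoinverse of `A` (the four Moore–Penrose conditions). -/
def IsMPInv {k r : ℕ} (A : Matrix (Fin k) (Fin r) ℂ) (X : Matrix (Fin r) (Fin k) ℂ) : Prop :=
  A * X * A = A ∧ X * A * X = X ∧ (A * X)ᴴ = A * X ∧ (X * A)ᴴ = X * A

open scoped Matrix.Norms.L2Operator in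
lemma spec_eq_l2norm {m n : ℕ} (A : Matrix (Fin m) (Fin n) ℂ) : spec A = ‖A‖ := rfl

lemma spec_mul_le {m n p : ℕ} (A : Matrix (Fin m) (Fin n) ℂ) (B : Matrix (Fin n) (Fin p) ℂ) :
    spec (A * B) ≤ spec A * spec B := Matrix.l2_opNorm_mul A B

lemma spec_nonneg {m n : ℕ} (A : Matrix (Fin m) (Fin n) ℂ) : 0 ≤ spec A := norm_nonneg _

lemma spec_diagonal_le {p : ℕ} (c : Fin p → ℂ) (r : ℝ) (hr : 0 ≤ r)
    (h : ∀ i, ‖c i‖ ≤ r) : spec (Matrix.diagonal c) ≤ r := by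
  unfold spec
  apply ContinuousLinearMap.opNorm_le_bound _ hr
  intro v
  rw [LinearMap.coe_toContinuousLinearMap']
  rw [Matrix.toEuclideanLin_apply]
  rw [EuclideanSpace.norm_eq, EuclideanSpace.norm_eq]
  have key : ∀ i : Fin p, ‖((Matrix.diagonal c) *ᵥ ((WithLp.equiv 2 (Fin p → ℂ)) v)) i‖ ^ 2
      ≤ r ^ 2 * ‖v i‖ ^ 2 := by
    intro i
    rw [Matrix.mulVec_diagonal]
    rw [norm_mul, mul_pow]
    exact mul_le_mul_of_nonneg_right (pow_le_pow_left₀ (norm_nonneg _) (h i) 2) (sq_nonneg _)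
  calc Real.sqrt (∑ i, ‖((WithLp.equiv 2 (Fin p → ℂ)).symm
        ((Matrix.diagonal c) *ᵥ ((WithLp.equiv 2 (Fin p → ℂ)) v))) i‖ ^ 2)
      ≤ Real.sqrt (∑ i, r ^ 2 * ‖v i‖ ^ 2) := by
        apply Real.sqrt_le_sqrt
        exact Finset.sum_le_sum fun i _ => key i
    _ = r * Real.sqrt (∑ i, ‖v i‖ ^ 2) := by
        rw [← Finset.mul_sum, Real.sqrt_mul (sq_nonneg r), Real.sqrt_sq hr]

lemma idem_eq_one {p : ℕ} (P : Matrix (Fin p) (Fin p) ℂ) (hPP : P * P = P)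
    (hr : P.rank = p) : P = 1 := by
  have hsurj : Function.Surjective P.mulVecLin := by
    rw [← LinearMap.range_eq_top]
    apply Submodule.eq_top_of_finrank_eq
    rw [show Module.finrank ℂ ↥(LinearMap.range P.mulVecLin) = P.rank from rfl, hr]
    simp
  have hfix : ∀ v, P *ᵥ v = v := by
    intro v
    obtain ⟨x, hx⟩ := hsurj v
    rw [Matrix.mulVecLin_apply] at hx
    rw [← hx, Matrix.mulVec_mulVec, hPP]
  apply Matrix.toLin'.injective
  apply LinearMap.ext
  intro v
  simp [Matrix.toLin'_apply, hfix]

lemma mpinv_unique {k r : ℕ} {A : Matrix (Fin k) (Fin r) ℂ} {X Y : Matrix (Fin r) (Fin k) ℂ}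
    (hX : IsMPInv A X) (hY : IsMPInv A Y) : X = Y := by
  obtain ⟨hx1, hx2, hx3, hx4⟩ := hX
  obtain ⟨hy1, hy2, hy3, hy4⟩ := hY
  have h1 : A * X = A * Y := by
    calc A * X = (A * Y * A) * X := by rw [hy1]
      _ = (A * Y) * (A * X) := by rw [Matrix.mul_assoc]
      _ = (A * Y)ᴴ * (A * X)ᴴ := by rw [hy3, hx3]
      _ = Yᴴ * (Aᴴ * (Xᴴ * Aᴴ)) := by
          simp only [conjTranspose_mul, Matrix.mul_assoc]
      _ = Yᴴ * (A * X * A)ᴴ := by simp only [conjTranspose_mul, Matrix.mul_assoc]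
      _ = (A * Y)ᴴ := by rw [hx1, conjTranspose_mul]
      _ = A * Y := hy3
  have h2 : X * A = Y * A := by
    calc X * A = X * (A * Y * A) := by rw [hy1]
      _ = (X * A) * (Y * A) := by simp only [Matrix.mul_assoc]
      _ = (X * A)ᴴ * (Y * A)ᴴ := by rw [hy4, hx4]
      _ = ((Aᴴ * Xᴴ) * Aᴴ) * Yᴴ := by
          simp only [conjTranspose_mul, Matrix.mul_assoc]
      _ = (A * X * A)ᴴ * Yᴴ := by simp only [conjTranspose_mul, Matrix.mul_assoc]
      _ = (Y * A)ᴴ := by rw [hx1, conjTranspose_mul]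
      _ = Y * A := hy4
  calc X = X * A * X := hx2.symm
    _ = X * (A * Y) := by rw [Matrix.mul_assoc, h1]
    _ = (Y * A) * Y := by rw [← Matrix.mul_assoc, h2]
    _ = Y := hy2

/-- Bound on the spectral norm of the CUR nucleus: let `M = U Σ Vᴴ` be a compact SVD of
the rank-`ρ` matrix `M` (`U` of size `m×ρ`, `V` of size `n×ρ`, each with orthonormal
columns, `Σ = diagonal d` with `d` the positive singular values of `M` in nonincreasing
order). Let `ι` select `k ≥ ρ` rows and `κ` select `l ≥ ρ` columns such that `U_{I,:}`
and `(Vᴴ)_{:,J}` have rank `ρ`, and set `G = U_{I,:} Σ (Vᴴ)_{:,J}` and `N = G⁺`. Then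
`‖N‖₂ ≤ ‖((Vᴴ)_{:,J})⁺‖₂ · ‖(U_{I,:})⁺‖₂ / σ_ρ(M)`, where `σ_ρ(M) = d ⟨ρ-1, _⟩` is the
smallest positive singular value of `M`. -/
theorem cur_nucleus_norm_bound {m n ρ k l : ℕ} (hρ : 1 ≤ ρ) (hk : ρ ≤ k) (hl : ρ ≤ l)
    (M : Matrix (Fin m) (Fin n) ℂ) (hrank : M.rank = ρ)
    (U : Matrix (Fin m) (Fin ρ) ℂ) (d : Fin ρ → ℝ) (V : Matrix (Fin n) (Fin ρ) ℂ)
    (hU : Uᴴ * U = 1) (hV : Vᴴ * V = 1) (hd : ∀ i, 0 < d i) (hda : Antitone d)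
    (hM : M = U * Matrix.diagonal (fun i => (d i : ℂ)) * Vᴴ)
    (ι : Fin k → Fin m) (hι : Function.Injective ι)
    (κ : Fin l → Fin n) (hκ : Function.Injective κ)
    (hUI : (U.submatrix ι id).rank = ρ)
    (hVJ : ((Vᴴ).submatrix id κ).rank = ρ)
    (N : Matrix (Fin l) (Fin k) ℂ)
    (hN : IsMPInv (U.submatrix ι id * Matrix.diagonal (fun i => (d i : ℂ)) *
      (Vᴴ).submatrix id κ) N)
    (Up : Matrix (Fin ρ) (Fin k) ℂ) (hUp : IsMPInv (U.submatrix ι id) Up)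
    (Vp : Matrix (Fin l) (Fin ρ) ℂ) (hVp : IsMPInv ((Vᴴ).submatrix id κ) Vp) :
    spec N ≤ spec Vp * spec Up / d ⟨ρ - 1, by omega⟩ := by
  set A := U.submatrix ι id with hA
  set B := (Vᴴ).submatrix id κ with hB
  set D : Matrix (Fin ρ) (Fin ρ) ℂ := Matrix.diagonal (fun i => (d i : ℂ)) with hD
  set Dinv : Matrix (Fin ρ) (Fin ρ) ℂ :=
    Matrix.diagonal (fun i => ((d i : ℂ))⁻¹) with hDinv
  have hdne : ∀ i, (d i : ℂ) ≠ 0 := fun i => by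
    exact_mod_cast Complex.ofReal_ne_zero.mpr (ne_of_gt (hd i))
  have hDDinv : D * Dinv = 1 := by
    rw [hD, hDinv, Matrix.diagonal_mul_diagonal]
    have h1 : (fun i => (d i : ℂ) * ((d i : ℂ))⁻¹) = fun _ : Fin ρ => (1 : ℂ) :=
      funext fun i => mul_inv_cancel₀ (hdne i)
    rw [h1, Matrix.diagonal_one]
  have hDinvD : Dinv * D = 1 := by
    rw [hD, hDinv, Matrix.diagonal_mul_diagonal]
    have h1 : (fun i => ((d i : ℂ))⁻¹ * (d i : ℂ)) = fun _ : Fin ρ => (1 : ℂ) :=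
      funext fun i => inv_mul_cancel₀ (hdne i)
    rw [h1, Matrix.diagonal_one]
  obtain ⟨hu1, hu2, hu3, hu4⟩ := hUp
  obtain ⟨hv1, hv2, hv3, hv4⟩ := hVp
  -- `Up * A = 1` since `A` has full column rank
  have hUpA : Up * A = 1 := by
    apply idem_eq_one
    · calc Up * A * (Up * A) = Up * (A * Up * A) := by simp only [Matrix.mul_assoc]
        _ = Up * A := by rw [hu1]
    · refine le_antisymm (le_trans (Matrix.rank_le_card_width _) (by simp)) ?_
      have : A = A * (Up * A) := by rw [← Matrix.mul_assoc, hu1]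
      calc ρ = A.rank := hUI.symm
        _ = (A * (Up * A)).rank := by rw [← this]
        _ ≤ (Up * A).rank := Matrix.rank_mul_le_right _ _
  -- `B * Vp = 1` since `B` has full row rank
  have hBVp : B * Vp = 1 := by
    apply idem_eq_one
    · calc B * Vp * (B * Vp) = B * Vp * B * Vp := by simp only [Matrix.mul_assoc]
        _ = B * Vp := by rw [hv1]
    · refine le_antisymm (le_trans (Matrix.rank_le_card_width _) (by simp)) ?_
      have : B = (B * Vp) * B := by rw [Matrix.mul_assoc, ← Matrix.mul_assoc, hv1]
      calc ρ = B.rank := hVJ.symm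
        _ = ((B * Vp) * B).rank := by rw [← this]
        _ ≤ (B * Vp).rank := Matrix.rank_mul_le_left _ _
  -- helper cancellation lemmas (right-associated forms)
  have hUpA' : ∀ {q : ℕ} (Y : Matrix (Fin ρ) (Fin q) ℂ), Up * (A * Y) = Y := by
    intro q Y; rw [← Matrix.mul_assoc, hUpA, Matrix.one_mul]
  have hBVp' : ∀ {q : ℕ} (Y : Matrix (Fin ρ) (Fin q) ℂ), B * (Vp * Y) = Y := by
    intro q Y; rw [← Matrix.mul_assoc, hBVp, Matrix.one_mul]
  have hDDinv' : ∀ {q : ℕ} (Y : Matrix (Fin ρ) (Fin q) ℂ), D * (Dinv * Y) = Y := by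
    intro q Y; rw [← Matrix.mul_assoc, hDDinv, Matrix.one_mul]
  have hDinvD' : ∀ {q : ℕ} (Y : Matrix (Fin ρ) (Fin q) ℂ), Dinv * (D * Y) = Y := by
    intro q Y; rw [← Matrix.mul_assoc, hDinvD, Matrix.one_mul]
  -- the candidate pseudoinverse
  have hGX : (A * D * B) * (Vp * Dinv * Up) = A * Up := by
    simp only [Matrix.mul_assoc]
    rw [hBVp', hDDinv']
  have hXG : (Vp * Dinv * Up) * (A * D * B) = Vp * B := by
    simp only [Matrix.mul_assoc]
    rw [hUpA', hDinvD']
  have hXmp : IsMPInv (A * D * B) (Vp * Dinv * Up) := by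
    refine ⟨?_, ?_, ?_, ?_⟩
    · rw [hGX]
      simp only [Matrix.mul_assoc]
      rw [hUpA']
    · rw [hXG]
      simp only [Matrix.mul_assoc]
      rw [hBVp']
    · rw [hGX]; exact hu3
    · rw [hXG]; exact hv4
  have hNX : N = Vp * Dinv * Up := mpinv_unique hN hXmp
  -- spectral bound
  have hlast : ∀ i : Fin ρ, ‖((d i : ℂ))⁻¹‖ ≤ (d ⟨ρ - 1, by omega⟩)⁻¹ := by
    intro i
    have hle : d ⟨ρ - 1, by omega⟩ ≤ d i :=
      hda (Fin.mk_le_of_le_val (Nat.le_sub_one_of_lt i.isLt))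
    rw [norm_inv, Complex.norm_real, Real.norm_eq_abs, abs_of_pos (hd i)]
    exact inv_anti₀ (hd _) hle
  have hDinvspec : spec Dinv ≤ (d ⟨ρ - 1, by omega⟩)⁻¹ :=
    spec_diagonal_le _ _ (inv_nonneg.mpr (le_of_lt (hd _))) hlast
  have hdpos : 0 < d ⟨ρ - 1, by omega⟩ := hd _
  calc spec N = spec (Vp * Dinv * Up) := by rw [hNX]
    _ ≤ spec (Vp * Dinv) * spec Up := spec_mul_le _ _
    _ ≤ (spec Vp * spec Dinv) * spec Up :=
        mul_le_mul_of_nonneg_right (spec_mul_le _ _) (spec_nonneg _)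
    _ ≤ (spec Vp * (d ⟨ρ - 1, by omega⟩)⁻¹) * spec Up := by
        apply mul_le_mul_of_nonneg_right _ (spec_nonneg _)
        exact mul_le_mul_of_nonneg_left hDinvspec (spec_nonneg _)
    _ = spec Vp * spec Up / d ⟨ρ - 1, by omega⟩ := by
        rw [div_eq_mul_inv]; ring
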